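/- For real numbers c₀ ≠ 0, α ≠ 0, m, the curve g(s) = I + ((s-1)/(α² c₀ s)) · [[c₀ - m, *],[1, m - c₀ s]], where the entry * is chosen so that det(g(s)) = 1 for all s > 0, satisfies g(1) = I and solves α s · dg/ds = g · X(x(s), y(s)) with x(s) = -m + c₀ s, y(s) = c₀ α s, and X(x,y) = [[x/y, -x²/y - y],[1/y, -x/y]]. -/

import Mathlib

set_option maxHeartbeats 1000000


theorem stmt_13 (c₀ α m : ℝ) (hc₀ : c₀ ≠ 0) (hα : α ≠ 0) :
    let g : ℝ → Matrix (Fin 2) (Fin 2) ℝ := fun s =>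
      1 + ((s - 1) / (α^2 * c₀ * s)) •
        !![c₀ - m, (c₀ - m) * (m - c₀ * s) - c₀^2 * α^2 * s; 1, m - c₀ * s]
    let X : ℝ → ℝ → Matrix (Fin 2) (Fin 2) ℝ := fun x y =>
      !![x/y, -x^2/y - y; 1/y, -x/y]
    g 1 = 1 ∧
    (∀ s : ℝ, 0 < s → (g s).det = 1) ∧
    (∀ s : ℝ, 0 < s → ∃ D : Matrix (Fin 2) (Fin 2) ℝ,
      (∀ i j, HasDerivAt (fun r => g r i j) (D i j) s) ∧
      (α * s) • D = g s * X (-m + c₀ * s) (c₀ * α * s)) := by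
  intro g X
  have hg : ∀ s : ℝ, g s = !![1 + (s - 1) / (α^2 * c₀ * s) * (c₀ - m),
      (s - 1) / (α^2 * c₀ * s) * ((c₀ - m) * (m - c₀ * s) - c₀^2 * α^2 * s);
      (s - 1) / (α^2 * c₀ * s) * 1, 1 + (s - 1) / (α^2 * c₀ * s) * (m - c₀ * s)] := by
    intro s; ext i j; fin_cases i <;> fin_cases j <;> simp [g, Matrix.one_apply]
  refine ⟨?_, ?_, ?_⟩
  · rw [hg]; norm_num; ext i j; fin_cases i <;> fin_cases j <;> simp [Matrix.one_apply]
  · intro s hs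
    rw [hg, Matrix.det_fin_two_of]
    field_simp
    ring
  · intro s hs
    have hs' : s ≠ 0 := ne_of_gt hs
    have ha2 : α^2 ≠ 0 := pow_ne_zero 2 hα
    have hk : α^2 * c₀ * s ≠ 0 := by
      exact mul_ne_zero (mul_ne_zero ha2 hc₀) hs'
    -- derivative of the scalar factor f r = (r-1)/(α^2*c₀*r)
    have hf : HasDerivAt (fun r : ℝ => (r - 1) / (α^2 * c₀ * r))
        (1 / (α^2 * c₀ * s^2)) s := by
      have h := ((hasDerivAt_id s).sub_const 1).fun_div
        ((hasDerivAt_id s).const_mul (α^2 * c₀)) (by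
          simpa [mul_assoc] using hk)
      have heq : (fun r : ℝ => (r - 1) / (α^2 * c₀ * r)) = fun y => (id y - 1) / (α^2 * c₀ * id y) := rfl
      rw [heq]
      refine h.congr_deriv ?_
      simp only [id_eq]
      field_simp
      ring
    -- linear factors
    have hQ01 : HasDerivAt (fun r : ℝ => (c₀ - m) * (m - c₀ * r) - c₀^2 * α^2 * r)
        ((c₀ - m) * (-c₀) - c₀^2 * α^2) s := by
      have h1 : HasDerivAt (fun r : ℝ => m - c₀ * r) (-c₀) s := by
        simpa using ((hasDerivAt_id s).const_mul c₀).const_sub m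
      have h2 : HasDerivAt (fun r : ℝ => c₀^2 * α^2 * r) (c₀^2 * α^2) s := by
        simpa using (hasDerivAt_id s).const_mul (c₀^2 * α^2)
      exact (h1.const_mul (c₀ - m)).sub h2
    have hQ11 : HasDerivAt (fun r : ℝ => m - c₀ * r) (-c₀) s := by
      simpa using ((hasDerivAt_id s).const_mul c₀).const_sub m
    refine ⟨!![1 / (α^2 * c₀ * s^2) * (c₀ - m),
        1 / (α^2 * c₀ * s^2) * ((c₀ - m) * (m - c₀ * s) - c₀^2 * α^2 * s)
          + (s - 1) / (α^2 * c₀ * s) * ((c₀ - m) * (-c₀) - c₀^2 * α^2);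
        1 / (α^2 * c₀ * s^2) * 1,
        1 / (α^2 * c₀ * s^2) * (m - c₀ * s) + (s - 1) / (α^2 * c₀ * s) * (-c₀)], ?_, ?_⟩
    · intro i j
      have hfun : ∀ r : ℝ, ∀ i j, g r i j = !![1 + (r - 1) / (α^2 * c₀ * r) * (c₀ - m),
          (r - 1) / (α^2 * c₀ * r) * ((c₀ - m) * (m - c₀ * r) - c₀^2 * α^2 * r);
          (r - 1) / (α^2 * c₀ * r) * 1, 1 + (r - 1) / (α^2 * c₀ * r) * (m - c₀ * r)] i j := by
        intro r i j; rw [hg r]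
      fin_cases i <;> fin_cases j <;>
        simp only [hfun, Matrix.cons_val', Matrix.cons_val_zero, Matrix.cons_val_one,
          Matrix.head_cons, Matrix.empty_val', Matrix.cons_val_fin_one, Matrix.head_fin_const,
          Matrix.of_apply, Fin.mk_zero, Fin.mk_one]
      · simpa using (hf.mul_const (c₀ - m)).const_add 1
      · simpa using hf.fun_mul hQ01
      · simpa using hf.mul_const 1
      · simpa using (hf.mul hQ11).const_add 1
    · rw [hg]
      show _ = _ * !![_,_;_,_]
      rw [Matrix.mul_fin_two]
      ext i j
      fin_cases i <;> fin_cases j <;>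
        · simp only [Matrix.smul_apply, Matrix.cons_val', Matrix.cons_val_zero,
            Matrix.cons_val_one, Matrix.head_cons, Matrix.empty_val', Matrix.cons_val_fin_one,
            Matrix.head_fin_const, Matrix.of_apply, Fin.mk_zero, Fin.mk_one, smul_eq_mul]
          field_simp
          ring
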